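/- Let G = (V,E) be a locally finite graph, q : V → ℝ, a > 0 and k ≥ 0 such that (G,q) is (a,k)-sparse, let θ be a phase and α > 0. Set ã := √(min(1/4, a²) + 2a + a²)/(1+a). If q ∈ K_α^θ, then q ∈ K_{α'} for α' = α(1+ã)/(1−ã); that is, there is C' ≥ 0 such that for all finitely supported f : V → ℂ, Q_{q₋}(f) ≤ α'(Q_Δ(f) + Q_{q₊}(f)) + C'·‖f‖². In particular, K_{0⁺}^θ = K_{0⁺}. -/

import Mathlib

open scoped BigOperators

noncomputable section

variable {V : Type*} [DecidableEq V] (G : SimpleGraph V) [DecidableRel G.Adj]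

/-- The squared `ℓ²`-norm `‖f‖² = ∑_x |f x|²` of a (finitely supported) function. -/
def qNormSq (f : V → ℂ) : ℝ := ∑' x, ‖f x‖ ^ 2

/-- The quadratic form of the Laplacian:
`Q_Δ(f) = (1/2) ∑_{x ~ y} |f x - f y|²` (sum over ordered pairs of adjacent vertices). -/
def qLap (f : V → ℂ) : ℝ :=
  (1 / 2) * ∑' (x : V), ∑' (y : V), if G.Adj x y then ‖f x - f y‖ ^ 2 else 0

/-- The magnetic quadratic form
`Q_θ(f) = (1/2) ∑_{x ~ y} |f x - e^{iθ(x,y)} f y|²`. -/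
def qMag (θ : V → V → ℝ) (f : V → ℂ) : ℝ :=
  (1 / 2) * ∑' (x : V), ∑' (y : V),
    if G.Adj x y then ‖f x - Complex.exp (Complex.I * (θ x y)) * f y‖ ^ 2 else 0

/-- The quadratic form of a potential: `Q_q(f) = ∑_x q x * |f x|²`. -/
def qPot (q : V → ℝ) (f : V → ℂ) : ℝ := ∑' x, q x * ‖f x‖ ^ 2

variable [G.LocallyFinite]

/-- The quadratic form of the degree: `Q_deg(f) = ∑_x deg x * |f x|²`. -/
def qDeg (f : V → ℂ) : ℝ := ∑' x, (G.degree x : ℝ) * ‖f x‖ ^ 2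

/-- Twice the number of undirected edges of the subgraph induced on `W`,
i.e. the number of ordered pairs of adjacent vertices in `W × W`. -/
def edgesTwice (W : Finset V) : ℕ := ((W ×ˢ W).filter fun p => G.Adj p.1 p.2).card

/-- The cardinality `|∂W|` of the edge boundary of `W`. -/
def bdryCard (W : Finset V) : ℕ :=
  ∑ x ∈ W, ((G.neighborFinset x).filter fun y => y ∉ W).card

/-- `(G, q)` is `(a,k)`-sparse: `2|E_W| ≤ k|W| + a(|∂W| + q₊(W))` for all finite `W`. -/
def IsSparse (q : V → ℝ) (a k : ℝ) : Prop :=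
  ∀ W : Finset V,
    (edgesTwice G W : ℝ) ≤ k * W.card + a * ((bdryCard G W : ℝ) + ∑ x ∈ W, max (q x) 0)

/-- The potential `q` belongs to the class `K_α`:
`Q_{q₋}(f) ≤ α (Q_Δ(f) + Q_{q₊}(f)) + C ‖f‖²` for all finitely supported `f`. -/
def KClass (q : V → ℝ) (α : ℝ) : Prop :=
  ∃ C : ℝ, 0 ≤ C ∧ ∀ f : V → ℂ, (Function.support f).Finite →
    qPot (fun x => max (-q x) 0) f ≤
      α * (qLap G f + qPot (fun x => max (q x) 0) f) + C * qNormSq f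

/-- The potential `q` belongs to the magnetic class `K_α^θ`:
`Q_{q₋}(f) ≤ α (Q_θ(f) + Q_{q₊}(f)) + C ‖f‖²` for all finitely supported `f`. -/
def KClassTheta (θ : V → V → ℝ) (q : V → ℝ) (α : ℝ) : Prop :=
  ∃ C : ℝ, 0 ≤ C ∧ ∀ f : V → ℂ, (Function.support f).Finite →
    qPot (fun x => max (-q x) 0) f ≤
      α * (qMag G θ f + qPot (fun x => max (q x) 0) f) + C * qNormSq f

/-- The Cheeger (isoperimetric) constant of `U ⊆ V`:
the infimum over nonempty finite `W ⊆ U` of `(|∂W| + q(W)) / (deg(W) + q(W))`,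
with the convention that the quotient is `0` when the denominator vanishes. -/
def cheeger (q : V → ℝ) (U : Set V) : ℝ :=
  ⨅ W : {W : Finset V // ↑W ⊆ U ∧ W.Nonempty},
    if (∑ x ∈ W.1, ((G.degree x : ℝ) + q x)) = 0 then 0
    else ((bdryCard G W.1 : ℝ) + ∑ x ∈ W.1, q x) / ∑ x ∈ W.1, ((G.degree x : ℝ) + q x)

/-- The Cheeger constant at infinity: `α_∞ = sup over finite K of α_{V∖K}`. -/
def cheegerInfty (q : V → ℝ) : ℝ :=
  ⨆ K : Finset V, cheeger G q ((↑K : Set V)ᶜ)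

/-! ### Auxiliary lemmas -/

set_option linter.unusedSectionVars false
set_option maxHeartbeats 1000000

section Aux

private lemma tsum_pot_eq (h : V → ℝ) (f : V → ℂ) (S : Finset V)
    (hs : ∀ x, f x ≠ 0 → x ∈ S) :
    ∑' x, h x * ‖f x‖ ^ 2 = ∑ x ∈ S, h x * ‖f x‖ ^ 2 := by
  refine tsum_eq_sum ?_
  intro b hb
  have hb0 : f b = 0 := by by_contra h'; exact hb (hs b h')
  simp [hb0]

private lemma tsum_norm_eq (f : V → ℂ) (S : Finset V)
    (hs : ∀ x, f x ≠ 0 → x ∈ S) :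
    ∑' x, ‖f x‖ ^ 2 = ∑ x ∈ S, ‖f x‖ ^ 2 := by
  refine tsum_eq_sum ?_
  intro b hb
  have hb0 : f b = 0 := by by_contra h'; exact hb (hs b h')
  simp [hb0]

private lemma double_eq (f : V → ℂ) (F : V → V → ℝ) (S : Finset V)
    (hs : ∀ x, f x ≠ 0 → x ∈ S)
    (hnb : ∀ x y, f x ≠ 0 → G.Adj x y → y ∈ S)
    (hF0 : ∀ x y, f x = 0 → f y = 0 → F x y = 0) :
    ∑' (x : V), ∑' (y : V), (if G.Adj x y then F x y else 0)
      = ∑ x ∈ S, ∑ y ∈ S, (if G.Adj x y then F x y else 0) := by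
  have hinner : ∀ x : V, ∑' (y : V), (if G.Adj x y then F x y else 0)
      = ∑ y ∈ G.neighborFinset x, (if G.Adj x y then F x y else 0) := by
    intro x
    refine tsum_eq_sum ?_
    intro b hb
    exact if_neg (fun hadj => hb ((G.mem_neighborFinset x b).2 hadj))
  rw [tsum_congr hinner]
  have houter : ∀ x, x ∉ S → ∑ y ∈ G.neighborFinset x, (if G.Adj x y then F x y else 0) = 0 := by
    intro x hx
    refine Finset.sum_eq_zero ?_
    intro y hy
    have hadj : G.Adj x y := (G.mem_neighborFinset x y).1 hy
    have hfx : f x = 0 := by by_contra h'; exact hx (hs x h')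
    have hfy : f y = 0 := by
      by_contra h'
      exact hx (hnb y x h' hadj.symm)
    simp [hadj, hF0 x y hfx hfy]
  rw [tsum_eq_sum (fun b hb => houter b hb)]
  refine Finset.sum_congr rfl ?_
  intro x hx
  have hR : ∑ y ∈ S, (if G.Adj x y then F x y else 0)
      = ∑ y ∈ S.filter (fun y => G.Adj x y), F x y := by
    rw [Finset.sum_filter]
  have hL : ∑ y ∈ G.neighborFinset x, (if G.Adj x y then F x y else 0)
      = ∑ y ∈ (G.neighborFinset x), F x y := by
    refine Finset.sum_congr rfl ?_
    intro y hy
    rw [if_pos ((G.mem_neighborFinset x y).1 hy)]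
  rw [hL, hR]
  rcases eq_or_ne (f x) 0 with hfx | hfx
  · have h1 : ∑ y ∈ G.neighborFinset x, F x y = ∑ y ∈ (G.neighborFinset x ∩ S), F x y := by
      refine (Finset.sum_subset (Finset.inter_subset_left) ?_).symm
      intro y hy hy'
      have hfy : f y = 0 := by
        by_contra h'
        exact hy' (Finset.mem_inter.2 ⟨hy, hs y h'⟩)
      exact hF0 x y hfx hfy
    have h2 : S.filter (fun y => G.Adj x y) = G.neighborFinset x ∩ S := by
      ext y; simp [Finset.mem_filter, Finset.mem_inter, G.mem_neighborFinset, and_comm]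
    rw [h1, h2]
  · have hsub : G.neighborFinset x ⊆ S := by
      intro y hy
      exact hnb x y hfx ((G.mem_neighborFinset x y).1 hy)
    have h2 : S.filter (fun y => G.Adj x y) = G.neighborFinset x := by
      ext y
      simp only [Finset.mem_filter, G.mem_neighborFinset]
      exact ⟨fun h => h.2, fun h => ⟨hsub ((G.mem_neighborFinset x y).2 h), h⟩⟩
    rw [h2]

private lemma dsum_pair (S : Finset V) (t : V → V → ℝ) :
    ∑ x ∈ S, ∑ y ∈ S, (if G.Adj x y then t x y else 0)
      = ∑ p ∈ (S ×ˢ S).filter (fun p => G.Adj p.1 p.2), t p.1 p.2 := by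
  rw [Finset.sum_filter, Finset.sum_product]

private lemma double_eq' (f : V → ℂ) (F : V → V → ℝ) (S : Finset V)
    (hs : ∀ x, f x ≠ 0 → x ∈ S)
    (hnb : ∀ x y, f x ≠ 0 → G.Adj x y → y ∈ S)
    (hF0 : ∀ x y, f x = 0 → f y = 0 → F x y = 0) :
    ∑' (x : V), ∑' (y : V), (if G.Adj x y then F x y else 0)
      = ∑ p ∈ (S ×ˢ S).filter (fun p => G.Adj p.1 p.2), F p.1 p.2 := by
  rw [double_eq G f F S hs hnb hF0]
  exact dsum_pair G S F

private lemma qLap_pair (f : V → ℂ) (S : Finset V)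
    (hs : ∀ x, f x ≠ 0 → x ∈ S)
    (hnb : ∀ x y, f x ≠ 0 → G.Adj x y → y ∈ S) :
    qLap G f
      = (1/2) * ∑ p ∈ (S ×ˢ S).filter (fun p => G.Adj p.1 p.2), ‖f p.1 - f p.2‖ ^ 2 := by
  unfold qLap
  congr 1
  exact double_eq' G f (fun x y => ‖f x - f y‖ ^ 2) S hs hnb (by intro x y h1 h2; simp [h1, h2])

private lemma qMag_pair (θ : V → V → ℝ) (f : V → ℂ) (S : Finset V)
    (hs : ∀ x, f x ≠ 0 → x ∈ S)
    (hnb : ∀ x y, f x ≠ 0 → G.Adj x y → y ∈ S) :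
    qMag G θ f = (1/2) * ∑ p ∈ (S ×ˢ S).filter (fun p => G.Adj p.1 p.2),
      ‖f p.1 - Complex.exp (Complex.I * (θ p.1 p.2)) * f p.2‖ ^ 2 := by
  unfold qMag
  congr 1
  exact double_eq' G f (fun x y => ‖f x - Complex.exp (Complex.I * (θ x y)) * f y‖ ^ 2) S hs hnb
    (by intro x y h1 h2; simp [h1, h2])

private lemma sum_swap_eq (P : Finset (V × V)) (hP : ∀ p ∈ P, p.swap ∈ P) (t : V × V → ℝ) :
    ∑ p ∈ P, t p.swap = ∑ p ∈ P, t p := by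
  refine Finset.sum_nbij' (fun p => p.swap) (fun p => p.swap) ?_ ?_ ?_ ?_ ?_ <;>
    simp_all [Prod.swap]

private lemma sum_half_swap (P : Finset (V × V)) (hP : ∀ p ∈ P, p.swap ∈ P)
    (v : V → ℝ) (t : V × V → ℝ) (ht0 : ∀ p ∈ P, 0 ≤ t p) (hts : ∀ p, t p.swap = t p) :
    2 * ∑ p ∈ P.filter (fun p => v p.2 < v p.1), t p ≤ ∑ p ∈ P, t p := by
  set P' := P.filter (fun p => v p.2 < v p.1) with hP'
  have hsub : P' ⊆ P := Finset.filter_subset _ _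
  have himg : P'.image Prod.swap ⊆ P := by
    intro p hp
    obtain ⟨r, hr, rfl⟩ := Finset.mem_image.1 hp
    exact hP r (hsub hr)
  have hdisj : Disjoint P' (P'.image Prod.swap) := by
    rw [Finset.disjoint_left]
    intro p hp hp'
    obtain ⟨r, hr, rfl⟩ := Finset.mem_image.1 hp'
    have h1 : v r.1 < v r.2 := (Finset.mem_filter.1 hp).2
    have h2 : v r.2 < v r.1 := (Finset.mem_filter.1 hr).2
    linarith
  have himgsum : ∑ p ∈ P'.image Prod.swap, t p = ∑ p ∈ P', t p := by
    rw [Finset.sum_image (fun x _ y _ h => Prod.swap_injective h)]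
    exact Finset.sum_congr rfl fun p _ => hts p
  have hunion : ∑ p ∈ P' ∪ P'.image Prod.swap, t p ≤ ∑ p ∈ P, t p := by
    refine Finset.sum_le_sum_of_subset_of_nonneg (Finset.union_subset hsub himg) ?_
    intro p hp _
    exact ht0 p hp
  rw [Finset.sum_union hdisj, himgsum] at hunion
  linarith

private lemma reduceS (f : V → ℂ) (hf : (Function.support f).Finite) :
    ∃ S : Finset V, (∀ x, f x ≠ 0 → x ∈ S) ∧ (∀ x y, f x ≠ 0 → G.Adj x y → y ∈ S) := by
  refine ⟨hf.toFinset ∪ hf.toFinset.biUnion (fun x => G.neighborFinset x), ?_, ?_⟩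
  · intro x hx; exact Finset.mem_union_left _ (hf.mem_toFinset.2 hx)
  · intro x y hx hadj
    exact Finset.mem_union_right _
      (Finset.mem_biUnion.2 ⟨x, hf.mem_toFinset.2 hx, (G.mem_neighborFinset x y).2 hadj⟩)

private lemma pair_swap_mem (S : Finset V) :
    ∀ p ∈ (S ×ˢ S).filter (fun p => G.Adj p.1 p.2),
      p.swap ∈ (S ×ˢ S).filter (fun p => G.Adj p.1 p.2) := by
  intro p hp
  rw [Finset.mem_filter, Finset.mem_product] at hp ⊢
  exact ⟨⟨hp.1.2, hp.1.1⟩, hp.2.symm⟩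

private lemma pair_fst_sum (f : V → ℂ) (S : Finset V)
    (hnb : ∀ x y, f x ≠ 0 → G.Adj x y → y ∈ S) :
    ∑ p ∈ (S ×ˢ S).filter (fun p => G.Adj p.1 p.2), ‖f p.1‖ ^ 2
      = ∑ x ∈ S, (G.degree x : ℝ) * ‖f x‖ ^ 2 := by
  have hd : ∑ x ∈ S, ∑ y ∈ S, (if G.Adj x y then ‖f x‖ ^ 2 else 0)
      = ∑ p ∈ (S ×ˢ S).filter (fun p => G.Adj p.1 p.2), ‖f p.1‖ ^ 2 :=
    dsum_pair G S (fun x _ => ‖f x‖ ^ 2)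
  rw [← hd]
  refine Finset.sum_congr rfl fun x hx => ?_
  rw [← Finset.sum_filter, Finset.sum_const, nsmul_eq_mul]
  rcases eq_or_ne (f x) 0 with h | h
  · simp [h]
  · congr 1
    have hNS : S.filter (fun y => G.Adj x y) = G.neighborFinset x := by
      ext y
      simp only [Finset.mem_filter, SimpleGraph.mem_neighborFinset]
      exact ⟨fun hh => hh.2, fun hh => ⟨hnb x y h hh, hh⟩⟩
    rw [hNS]
    exact_mod_cast G.card_neighborFinset_eq_degree x

private lemma pair_deg2 (f : V → ℂ) (S : Finset V)
    (hnb : ∀ x y, f x ≠ 0 → G.Adj x y → y ∈ S) :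
    ∑ p ∈ (S ×ˢ S).filter (fun p => G.Adj p.1 p.2), (‖f p.1‖ ^ 2 + ‖f p.2‖ ^ 2)
      = 2 * ∑ x ∈ S, (G.degree x : ℝ) * ‖f x‖ ^ 2 := by
  rw [Finset.sum_add_distrib]
  have h2 : ∑ p ∈ (S ×ˢ S).filter (fun p => G.Adj p.1 p.2), ‖f p.2‖ ^ 2
      = ∑ p ∈ (S ×ˢ S).filter (fun p => G.Adj p.1 p.2), ‖f p.1‖ ^ 2 := by
    have := sum_swap_eq ((S ×ˢ S).filter (fun p => G.Adj p.1 p.2))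
      (pair_swap_mem G S) (fun p => ‖f p.1‖ ^ 2)
    exact this
  rw [h2, pair_fst_sum G f S hnb]
  ring

private lemma deg_eq_edges_add_bdry (A : Finset V) :
    (∑ x ∈ A, G.degree x) = edgesTwice G A + bdryCard G A := by
  have h1 : edgesTwice G A = ∑ x ∈ A, ((G.neighborFinset x).filter fun y => y ∈ A).card := by
    unfold edgesTwice
    rw [Finset.card_filter, Finset.sum_product]
    refine Finset.sum_congr rfl fun x hx => ?_
    rw [show ((G.neighborFinset x).filter fun y => y ∈ A) = A.filter (fun y => G.Adj x y) from by
      ext y; simp [SimpleGraph.mem_neighborFinset, and_comm], Finset.card_filter]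
  rw [h1]
  unfold bdryCard
  rw [← Finset.sum_add_distrib]
  refine Finset.sum_congr rfl fun x hx => ?_
  rw [← SimpleGraph.card_neighborFinset_eq_degree]
  exact (Finset.card_filter_add_card_filter_not _).symm

private lemma coarea (q : V → ℝ) (a k : ℝ)
    (hsp : ∀ A : Finset V, ∑ x ∈ A, ((G.degree x : ℝ) + max (q x) 0)
        ≤ k * A.card + (1 + a) * ((bdryCard G A : ℝ) + ∑ x ∈ A, max (q x) 0))
    (S : Finset V) :
    ∀ n : ℕ, ∀ v : V → ℝ, (∀ x, 0 ≤ v x) → (∀ x, v x ≠ 0 → x ∈ S) →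
      ((S.filter fun x => 0 < v x).image v).card ≤ n →
      ∑ x ∈ S, ((G.degree x : ℝ) + max (q x) 0) * v x
        ≤ k * ∑ x ∈ S, v x
          + (1 + a) * ((∑ x ∈ S, ∑ y ∈ G.neighborFinset x, max (v x - v y) 0)
              + ∑ x ∈ S, max (q x) 0 * v x) := by
  intro n
  induction n with
  | zero =>
    intro v hv0 hvS hcard
    have hz : ∀ x ∈ S, v x = 0 := by
      intro x hx
      by_contra h
      have hpos : 0 < v x := lt_of_le_of_ne (hv0 x) (Ne.symm h)
      have hmem : v x ∈ (S.filter fun x => 0 < v x).image v :=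
        Finset.mem_image_of_mem v (Finset.mem_filter.2 ⟨hx, hpos⟩)
      have := Finset.card_pos.2 ⟨_, hmem⟩
      omega
    have e1 : ∑ x ∈ S, ((G.degree x : ℝ) + max (q x) 0) * v x = 0 :=
      Finset.sum_eq_zero fun x hx => by rw [hz x hx, mul_zero]
    have e2 : ∑ x ∈ S, v x = 0 := Finset.sum_eq_zero hz
    have e3 : ∑ x ∈ S, max (q x) 0 * v x = 0 :=
      Finset.sum_eq_zero fun x hx => by rw [hz x hx, mul_zero]
    have e4 : ∑ x ∈ S, ∑ y ∈ G.neighborFinset x, max (v x - v y) 0 = 0 := by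
      refine Finset.sum_eq_zero fun x hx => Finset.sum_eq_zero fun y hy => ?_
      rw [hz x hx]
      exact max_eq_right (by linarith [hv0 y])
    rw [e1, e2, e3, e4]
    simp
  | succ n ih =>
    intro v hv0 hvS hcard
    by_cases hle : ((S.filter fun x => 0 < v x).image v).card ≤ n
    · exact ih v hv0 hvS hle
    have hne : ((S.filter fun x => 0 < v x).image v).Nonempty := by
      rw [← Finset.card_pos]; omega
    set A := S.filter (fun x => 0 < v x) with hA
    set m := (A.image v).min' hne with hm
    have hm_mem : m ∈ A.image v := Finset.min'_mem _ hne
    obtain ⟨x₀, hx₀A, hx₀⟩ := Finset.mem_image.1 hm_mem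
    have hm_pos : 0 < m := hx₀ ▸ (Finset.mem_filter.1 hx₀A).2
    have hAS : A ⊆ S := Finset.filter_subset _ _
    have hAmin : ∀ x ∈ A, m ≤ v x := fun x hx =>
      Finset.min'_le _ _ (Finset.mem_image_of_mem v hx)
    have hnotA : ∀ x, x ∉ A → v x = 0 := by
      intro x hx
      by_contra h
      have hpos : 0 < v x := lt_of_le_of_ne (hv0 x) (Ne.symm h)
      exact hx (Finset.mem_filter.2 ⟨hvS x h, hpos⟩)
    set v' := fun x => if x ∈ A then v x - m else 0 with hv'
    have hv'0 : ∀ x, 0 ≤ v' x := by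
      intro x
      simp only [hv']
      split
      · next h => linarith [hAmin x h]
      · exact le_refl 0
    have hv'S : ∀ x, v' x ≠ 0 → x ∈ S := by
      intro x hx
      simp only [hv'] at hx
      by_cases h : x ∈ A
      · exact hAS h
      · simp [h] at hx
    have hcard' : ((S.filter fun x => 0 < v' x).image v').card ≤ n := by
      have hsub : (S.filter fun x => 0 < v' x).image v'
          ⊆ ((A.image v).erase m).image (fun t => t - m) := by
        intro t ht
        obtain ⟨x, hx, rfl⟩ := Finset.mem_image.1 ht
        have hx' : 0 < v' x := (Finset.mem_filter.1 hx).2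
        have hxA : x ∈ A := by
          by_contra h
          simp [hv', h] at hx'
        have hvm : v x ≠ m := by
          intro h
          rw [hv'] at hx'
          simp only [if_pos hxA, h] at hx'
          linarith
        refine Finset.mem_image.2 ⟨v x,
          Finset.mem_erase.2 ⟨hvm, Finset.mem_image_of_mem v hxA⟩, ?_⟩
        simp [hv', hxA]
      have h1 := Finset.card_le_card hsub
      have h2 := Finset.card_image_le (s := (A.image v).erase m) (f := fun t => t - m)
      have h3 : ((A.image v).erase m).card = (A.image v).card - 1 :=
        Finset.card_erase_of_mem hm_mem
      omega
    have IH := ih v' hv'0 hv'S hcard'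
    have hlin : ∀ h : V → ℝ, ∑ x ∈ S, h x * v x
        = ∑ x ∈ S, h x * v' x + m * ∑ x ∈ A, h x := by
      intro h
      have hsplit : ∀ x ∈ S, h x * v x = h x * v' x + (if x ∈ A then m * h x else 0) := by
        intro x hx
        by_cases hxA : x ∈ A
        · simp only [hv', if_pos hxA]; ring
        · simp [hv', hxA, hnotA x hxA]
      rw [Finset.sum_congr rfl hsplit, Finset.sum_add_distrib]
      congr 1
      rw [Finset.sum_ite_mem, Finset.inter_eq_right.2 hAS, Finset.mul_sum]
    have hTsplit : ∀ x ∈ S, ∀ y ∈ G.neighborFinset x,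
        max (v x - v y) 0 = max (v' x - v' y) 0 + (if x ∈ A ∧ y ∉ A then m else 0) := by
      intro x hx y hy
      by_cases hxA : x ∈ A
      · by_cases hyA : y ∈ A
        · rw [if_neg (by simp [hyA])]
          simp only [hv', if_pos hxA, if_pos hyA]
          rw [show v x - m - (v y - m) = v x - v y by ring, add_zero]
        · have hy0 : v y = 0 := hnotA y hyA
          rw [if_pos ⟨hxA, hyA⟩]
          simp only [hv', if_pos hxA, if_neg hyA]
          rw [hy0, sub_zero, sub_zero]
          rw [max_eq_left (by linarith [hAmin x hxA]), max_eq_left (by linarith [hAmin x hxA])]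
          ring
      · have hx0 : v x = 0 := hnotA x hxA
        rw [if_neg (by tauto)]
        simp only [hv', if_neg hxA]
        rw [max_eq_right (by linarith [hv0 y]), max_eq_right (by linarith [hv'0 y]), add_zero]
    have hT : ∑ x ∈ S, ∑ y ∈ G.neighborFinset x, max (v x - v y) 0
        = (∑ x ∈ S, ∑ y ∈ G.neighborFinset x, max (v' x - v' y) 0)
          + m * (bdryCard G A : ℝ) := by
      rw [Finset.sum_congr rfl (fun x hx => Finset.sum_congr rfl (hTsplit x hx))]
      have hstep : ∀ x ∈ S, ∑ y ∈ G.neighborFinset x,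
          (max (v' x - v' y) 0 + (if x ∈ A ∧ y ∉ A then m else 0))
          = (∑ y ∈ G.neighborFinset x, max (v' x - v' y) 0)
            + (if x ∈ A then
                m * (((G.neighborFinset x).filter fun y => y ∉ A).card : ℝ) else 0) := by
        intro x hx
        rw [Finset.sum_add_distrib]
        congr 1
        by_cases hxA : x ∈ A
        · simp only [hxA, true_and, if_true]
          rw [← Finset.sum_filter, Finset.sum_const, nsmul_eq_mul, mul_comm]
        · simp [hxA]
      rw [Finset.sum_congr rfl hstep, Finset.sum_add_distrib]
      congr 1
      rw [Finset.sum_ite_mem, Finset.inter_eq_right.2 hAS]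
      unfold bdryCard
      push_cast
      rw [Finset.mul_sum]
    have hlin1 := hlin (fun x => (G.degree x : ℝ) + max (q x) 0)
    have hlin3 := hlin (fun x => max (q x) 0)
    have hlin2 : ∑ x ∈ S, v x = ∑ x ∈ S, v' x + m * A.card := by
      have := hlin (fun _ => (1 : ℝ))
      simpa using this
    have hspA' := mul_le_mul_of_nonneg_left (hsp A) (le_of_lt hm_pos)
    rw [hlin1, hlin2, hlin3, hT]
    nlinarith [IH, hspA']

private lemma algebraC (a k ta c D Q p n : ℝ) (ha : 0 < a) (hk : 0 ≤ k)
    (hD : 0 ≤ D) (hQ : 0 ≤ Q) (hp : 0 ≤ p) (hn : 0 ≤ n) (hQ2D : Q ≤ 2 * D)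
    (hta_pos : 0 < ta) (hta1 : ta < 1)
    (hta_a : a ≤ ta * (1 + a))
    (hta_sq : 2 * a + a ^ 2 ≤ (ta * (1 + a)) ^ 2)
    (hc : c * (ta * (1 + a) ^ 2) = 1)
    (hcoarea : D + p ≤ k * n + (1 + a) * (Real.sqrt (Q * (2 * D - Q)) + p)) :
    (1 - ta) * (D + p) ≤ Q + p + (1 + c) * (k * n) := by
  have h1a : (0 : ℝ) < 1 + a := by linarith
  have hc_pos : 0 < c := by nlinarith
  have hkn : 0 ≤ k * n := mul_nonneg hk hn
  set R := Real.sqrt (Q * (2 * D - Q)) with hR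
  have hR0 : 0 ≤ R := Real.sqrt_nonneg _
  have hR2 : R ^ 2 = Q * (2 * D - Q) := Real.sq_sqrt (by nlinarith)
  have key : D - a * p - k * n ≤ (1 + a) * R := by nlinarith
  by_cases hcase : D ≤ a * p + k * n
  · have h1 : (1 - ta) * (1 + a) ≤ 1 := by nlinarith
    nlinarith [mul_nonneg hc_pos.le hkn, mul_nonneg hQ hp]
  · push_neg at hcase
    set s := a * p + k * n with hs
    have hs0 : 0 ≤ s := by positivity
    have hsq : (D - s) ^ 2 ≤ (1 + a) ^ 2 * (Q * (2 * D - Q)) := by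
      have h2 : D - s ≤ (1 + a) * R := by rw [hs]; linarith [key]
      nlinarith [h2, sub_nonneg.2 hcase.le]
    have hgoal2 : D - Q ≤ ta * D + c * s := by
      have hrhs0 : 0 ≤ ta * D + c * s := by positivity
      by_cases hDQ : D - Q ≤ 0
      · linarith
      · push_neg at hDQ
        have hsq2 : (D - Q) ^ 2 ≤ (ta * D + c * s) ^ 2 := by
          nlinarith [hsq, sq_nonneg s, sq_nonneg (c * s), mul_pos hta_pos h1a,
            sq_nonneg (1 + a), mul_nonneg (mul_nonneg hc_pos.le hc_pos.le) (sq_nonneg s),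
            sq_nonneg D, mul_nonneg hD hs0]
        nlinarith [hsq2, hrhs0, hDQ]
    have hca : c * a ≤ ta := by
      have h3 : 0 < ta * (1 + a) ^ 2 := by positivity
      nlinarith [hc, hta_sq, mul_pos hta_pos h3]
    have hcap : c * a * p ≤ ta * p := mul_le_mul_of_nonneg_right hca hp
    nlinarith [hgoal2, hcap, mul_nonneg hc_pos.le hkn]

private lemma magToLap (q : V → ℝ) (a k : ℝ) (ha : 0 < a) (hk : 0 ≤ k)
    (hsparse : IsSparse G q a k) (θ : V → V → ℝ) (α : ℝ) (hα : 0 < α) (ta : ℝ)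
    (hta : ta = Real.sqrt (min (1 / 4) (a ^ 2) + 2 * a + a ^ 2) / (1 + a)) :
    KClassTheta G θ q α → KClass G q (α * (1 + ta) / (1 - ta)) := by
  rintro ⟨C, hC0, hC⟩
  have h1a : (0:ℝ) < 1 + a := by linarith
  have hm0 : (0:ℝ) ≤ min (1/4) (a^2) := le_min (by norm_num) (sq_nonneg a)
  have hm14 : min (1/4) (a^2) ≤ (1/4:ℝ) := min_le_left _ _
  have harg : (0:ℝ) ≤ min (1/4) (a^2) + 2*a + a^2 := by nlinarith
  have hta_eq : ta * (1+a) = Real.sqrt (min (1/4) (a^2) + 2*a + a^2) := by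
    rw [hta]; field_simp
  have hsq : (ta * (1+a))^2 = min (1/4) (a^2) + 2*a + a^2 := by
    rw [hta_eq]; exact Real.sq_sqrt harg
  have hta_pos : 0 < ta := by
    rw [hta]
    apply div_pos _ h1a
    apply Real.sqrt_pos.2
    nlinarith
  have hta_a : a ≤ ta * (1+a) := by
    rw [hta_eq]
    have h1 := Real.sqrt_le_sqrt (show a^2 ≤ min (1/4) (a^2) + 2*a + a^2 by nlinarith)
    rwa [Real.sqrt_sq ha.le] at h1
  have hta_lt1 : ta < 1 := by
    rw [hta, div_lt_one h1a]
    exact (Real.sqrt_lt' h1a).2 (by nlinarith)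
  have hta_sq2 : 2*a + a^2 ≤ (ta*(1+a))^2 := by rw [hsq]; linarith
  have h1t : 0 < 1 - ta := by linarith
  set c := 1/(ta * (1+a)^2) with hcdef
  have hcpos : 0 < c := by positivity
  have hc : c * (ta * (1+a)^2) = 1 := by
    rw [hcdef]; field_simp
  set kt := (1+c)*k with hktdef
  have hkt0 : 0 ≤ kt := by positivity
  have hE0 : 0 ≤ 2*kt/(1-ta) := div_nonneg (by linarith) h1t.le
  refine ⟨C + α * (2*kt/(1-ta)), by positivity, ?_⟩
  intro f hf
  obtain ⟨S, hs, hnb⟩ := reduceS G f hf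
  set g : V → ℂ := fun x => (‖f x‖ : ℂ) with hgdef
  have hgnorm : ∀ x, ‖g x‖ = ‖f x‖ := by
    intro x; rw [hgdef]; simp only []
    rw [Complex.norm_real, Real.norm_eq_abs, abs_norm]
  have hg0 : ∀ x, g x = 0 ↔ f x = 0 := by
    intro x; rw [hgdef]; simp only []
    rw [Complex.ofReal_eq_zero, norm_eq_zero]
  have hgfin : (Function.support g).Finite := by
    refine hf.subset ?_
    intro x hx
    rw [Function.mem_support] at hx ⊢
    exact fun h => hx ((hg0 x).2 h)
  have hgs : ∀ x, g x ≠ 0 → x ∈ S := fun x hx => hs x (fun h => hx ((hg0 x).2 h))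
  have hgnb : ∀ x y, g x ≠ 0 → G.Adj x y → y ∈ S :=
    fun x y hx hadj => hnb x y (fun h => hx ((hg0 x).2 h)) hadj
  set P := (S ×ˢ S).filter (fun p => G.Adj p.1 p.2) with hP
  set QF := ∑ p ∈ P, (‖f p.1‖ - ‖f p.2‖)^2 with hQF
  set WF := ∑ p ∈ P, (‖f p.1‖ + ‖f p.2‖)^2 with hWF
  set D := ∑ x ∈ S, (G.degree x : ℝ) * ‖f x‖^2 with hD
  set p0 := ∑ x ∈ S, max (q x) 0 * ‖f x‖^2 with hp0
  set n0 := ∑ x ∈ S, ‖f x‖^2 with hn0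
  have hnormf : qNormSq f = n0 := tsum_norm_eq f S hs
  have hpotplus : qPot (fun x => max (q x) 0) f = p0 :=
    tsum_pot_eq (fun x => max (q x) 0) f S hs
  have hpotg : ∀ h : V → ℝ, qPot h g = qPot h f := by
    intro h; unfold qPot; exact tsum_congr fun x => by rw [hgnorm]
  have hnormg : qNormSq g = qNormSq f := tsum_congr fun x => by rw [hgnorm]
  have hlapg : qLap G g = (1/2) * QF := by
    rw [qLap_pair G g S hgs hgnb, hQF]
    congr 1
    refine Finset.sum_congr rfl fun p _ => ?_
    rw [hgdef]
    simp only []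
    rw [← Complex.ofReal_sub, Complex.norm_real, Real.norm_eq_abs, sq_abs]
  have hlapf : qLap G f = (1/2) * ∑ p ∈ P, ‖f p.1 - f p.2‖^2 := qLap_pair G f S hs hnb
  have hQF_le : QF ≤ ∑ p ∈ P, ‖f p.1 - f p.2‖^2 := by
    refine Finset.sum_le_sum fun p _ => ?_
    have h1 := abs_norm_sub_norm_le (f p.1) (f p.2)
    calc (‖f p.1‖ - ‖f p.2‖)^2 = |‖f p.1‖ - ‖f p.2‖|^2 := (sq_abs _).symm
      _ ≤ ‖f p.1 - f p.2‖^2 := pow_le_pow_left₀ (abs_nonneg _) h1 2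
  have hexp : ∀ x y : V, ‖Complex.exp (Complex.I * (θ x y))‖ = 1 := by
    intro x y
    rw [Complex.norm_exp]
    simp
  have hmagg : qMag G θ g ≤ (1/2) * WF := by
    rw [qMag_pair G θ g S hgs hgnb]
    have h12 : (0:ℝ) ≤ 1/2 := by norm_num
    refine mul_le_mul_of_nonneg_left ?_ h12
    refine Finset.sum_le_sum fun p _ => ?_
    have h1 : ‖g p.1 - Complex.exp (Complex.I * (θ p.1 p.2)) * g p.2‖ ≤ ‖f p.1‖ + ‖f p.2‖ := by
      calc ‖g p.1 - Complex.exp (Complex.I * (θ p.1 p.2)) * g p.2‖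
          ≤ ‖g p.1‖ + ‖Complex.exp (Complex.I * (θ p.1 p.2)) * g p.2‖ := norm_sub_le _ _
        _ = ‖f p.1‖ + ‖f p.2‖ := by
            rw [norm_mul, hexp, one_mul, hgnorm, hgnorm]
    exact pow_le_pow_left₀ (norm_nonneg _) h1 2
  have hdeg2 : ∑ p ∈ P, (‖f p.1‖^2 + ‖f p.2‖^2) = 2 * D := pair_deg2 G f S hnb
  have hWQ : WF + QF = 4 * D := by
    calc WF + QF = ∑ p ∈ P, ((‖f p.1‖+‖f p.2‖)^2 + (‖f p.1‖-‖f p.2‖)^2) :=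
        (Finset.sum_add_distrib).symm
      _ = ∑ p ∈ P, 2*(‖f p.1‖^2 + ‖f p.2‖^2) := Finset.sum_congr rfl fun p _ => by ring
      _ = 2 * ∑ p ∈ P, (‖f p.1‖^2 + ‖f p.2‖^2) := by rw [Finset.mul_sum]
      _ = 4 * D := by rw [hdeg2]; ring
  have hQF0 : 0 ≤ QF := Finset.sum_nonneg fun p _ => sq_nonneg _
  have hWF0 : 0 ≤ WF := Finset.sum_nonneg fun p _ => sq_nonneg _
  have hD0 : 0 ≤ D := Finset.sum_nonneg fun x _ => by positivity
  have hp00 : 0 ≤ p0 := Finset.sum_nonneg fun x _ =>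
    mul_nonneg (le_max_right _ 0) (by positivity)
  have hn00 : 0 ≤ n0 := Finset.sum_nonneg fun x _ => by positivity
  -- sparseness consequence
  have hsp' : ∀ A : Finset V, ∑ x ∈ A, ((G.degree x : ℝ) + max (q x) 0)
      ≤ k * A.card + (1+a) * ((bdryCard G A : ℝ) + ∑ x ∈ A, max (q x) 0) := by
    intro A
    have h1 := hsparse A
    have h2 := deg_eq_edges_add_bdry G A
    have h3 : (∑ x ∈ A, ((G.degree x:ℝ) + max (q x) 0))
        = (edgesTwice G A : ℝ) + (bdryCard G A : ℝ) + ∑ x ∈ A, max (q x) 0 := by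
      rw [Finset.sum_add_distrib]
      have h4 : (∑ x ∈ A, (G.degree x:ℝ)) = ((∑ x ∈ A, G.degree x : ℕ) : ℝ) := by push_cast; rfl
      rw [h4, h2]; push_cast; ring
    have hq0 : (0:ℝ) ≤ ∑ x ∈ A, max (q x) 0 :=
      Finset.sum_nonneg fun x _ => le_max_right _ 0
    have hb0 : (0:ℝ) ≤ (bdryCard G A : ℝ) := Nat.cast_nonneg _
    rw [h3]; linarith
  -- coarea
  set T := ∑ x ∈ S, ∑ y ∈ G.neighborFinset x, max (‖f x‖^2 - ‖f y‖^2) 0 with hTdef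
  set P' := P.filter (fun p => ‖f p.2‖^2 < ‖f p.1‖^2) with hP'
  have hcl : ∑ x ∈ S, ((G.degree x:ℝ) + max (q x) 0) * ‖f x‖^2 = D + p0 := by
    rw [hD, hp0, ← Finset.sum_add_distrib]
    exact Finset.sum_congr rfl fun x _ => by ring
  have hcoarea : D + p0 ≤ k * n0 + (1+a) * (T + p0) := by
    rw [← hcl]
    exact coarea G q a k hsp' S
      (((S.filter fun x => 0 < ‖f x‖^2).image (fun x => ‖f x‖^2)).card)
      (fun x => ‖f x‖^2) (fun x => by positivity)
      (fun x hx => hs x (fun h => hx (by simp [h]))) le_rfl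
  have hTP : T = ∑ p ∈ P', (‖f p.1‖^2 - ‖f p.2‖^2) := by
    have h1 : T = ∑ x ∈ S, ∑ y ∈ S, (if G.Adj x y then max (‖f x‖^2 - ‖f y‖^2) 0 else 0) := by
      rw [hTdef]
      refine Finset.sum_congr rfl fun x hx => ?_
      rcases eq_or_ne (f x) 0 with hfx | hfx
      · have hvy : ∀ y : V, ‖f x‖^2 - ‖f y‖^2 ≤ 0 := by
          intro y
          have h9 : (0:ℝ) ≤ ‖f y‖^2 := by positivity
          have hx0 : ‖f x‖ = 0 := by rw [hfx]; exact norm_zero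
          rw [hx0]
          linarith
        have hL : ∑ y ∈ G.neighborFinset x, max (‖f x‖^2 - ‖f y‖^2) 0 = 0 :=
          Finset.sum_eq_zero fun y _ => max_eq_right (hvy y)
        have hR : ∑ y ∈ S, (if G.Adj x y then max (‖f x‖^2 - ‖f y‖^2) 0 else 0) = 0 := by
          refine Finset.sum_eq_zero fun y _ => ?_
          split
          · exact max_eq_right (hvy y)
          · rfl
        rw [hL, hR]
      · have hNS : S.filter (fun y => G.Adj x y) = G.neighborFinset x := by
          ext y
          simp only [Finset.mem_filter, SimpleGraph.mem_neighborFinset]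
          exact ⟨fun hh => hh.2, fun hh => ⟨hnb x y hfx hh, hh⟩⟩
        rw [← Finset.sum_filter, hNS]
    have h2 : ∑ x ∈ S, ∑ y ∈ S, (if G.Adj x y then max (‖f x‖^2 - ‖f y‖^2) 0 else 0)
        = ∑ p ∈ P, max (‖f p.1‖^2 - ‖f p.2‖^2) 0 :=
      dsum_pair G S (fun x y => max (‖f x‖^2 - ‖f y‖^2) 0)
    have h3 : ∑ p ∈ P', max (‖f p.1‖^2 - ‖f p.2‖^2) 0
        = ∑ p ∈ P, max (‖f p.1‖^2 - ‖f p.2‖^2) 0 := by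
      refine Finset.sum_subset (Finset.filter_subset _ _) ?_
      intro p hp hp'
      have : ¬ (‖f p.2‖^2 < ‖f p.1‖^2) := by
        intro hcon
        exact hp' (Finset.mem_filter.2 ⟨hp, hcon⟩)
      exact max_eq_right (by linarith [not_lt.1 this])
    have h4 : ∑ p ∈ P', max (‖f p.1‖^2 - ‖f p.2‖^2) 0
        = ∑ p ∈ P', (‖f p.1‖^2 - ‖f p.2‖^2) := by
      refine Finset.sum_congr rfl fun p hp => ?_
      have := (Finset.mem_filter.1 hp).2
      exact max_eq_left (by linarith)
    rw [h1, h2, ← h3, h4]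
  have hT0 : 0 ≤ T := by
    rw [hTP]
    refine Finset.sum_nonneg fun p hp => ?_
    have := (Finset.mem_filter.1 hp).2
    linarith
  have hcs1 : ∑ p ∈ P', (‖f p.1‖ - ‖f p.2‖)^2 ≤ (1/2) * QF := by
    have h8 : 2 * ∑ p ∈ P', (‖f p.1‖ - ‖f p.2‖)^2 ≤ QF :=
      sum_half_swap P (pair_swap_mem G S) (fun x => ‖f x‖^2)
        (fun p => (‖f p.1‖ - ‖f p.2‖)^2) (fun p _ => sq_nonneg _)
        (fun p => by simp only [Prod.fst_swap, Prod.snd_swap]; ring)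
    linarith
  have hcs2 : ∑ p ∈ P', (‖f p.1‖ + ‖f p.2‖)^2 ≤ (1/2) * WF := by
    have h8 : 2 * ∑ p ∈ P', (‖f p.1‖ + ‖f p.2‖)^2 ≤ WF :=
      sum_half_swap P (pair_swap_mem G S) (fun x => ‖f x‖^2)
        (fun p => (‖f p.1‖ + ‖f p.2‖)^2) (fun p _ => sq_nonneg _)
        (fun p => by simp only [Prod.fst_swap, Prod.snd_swap]; ring)
    linarith
  have hQ2D : (1/2)*QF ≤ 2*D := by linarith
  have hTsqrt : T ≤ Real.sqrt (((1/2)*QF) * (2*D - (1/2)*QF)) := by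
    have hTuw : T = ∑ p ∈ P', (‖f p.1‖ - ‖f p.2‖) * (‖f p.1‖ + ‖f p.2‖) := by
      rw [hTP]
      exact Finset.sum_congr rfl fun p _ => by ring
    have hcs := Finset.sum_mul_sq_le_sq_mul_sq P'
      (fun p => ‖f p.1‖ - ‖f p.2‖) (fun p => ‖f p.1‖ + ‖f p.2‖)
    have hs1 : 0 ≤ ∑ p ∈ P', (‖f p.1‖ - ‖f p.2‖)^2 :=
      Finset.sum_nonneg fun p _ => sq_nonneg _
    have hs2 : 0 ≤ ∑ p ∈ P', (‖f p.1‖ + ‖f p.2‖)^2 :=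
      Finset.sum_nonneg fun p _ => sq_nonneg _
    have hbound : T^2 ≤ ((1/2)*QF) * ((1/2)*WF) := by
      rw [hTuw]
      calc (∑ p ∈ P', (‖f p.1‖ - ‖f p.2‖) * (‖f p.1‖ + ‖f p.2‖))^2
          ≤ (∑ p ∈ P', (‖f p.1‖ - ‖f p.2‖)^2) * (∑ p ∈ P', (‖f p.1‖ + ‖f p.2‖)^2) := hcs
        _ ≤ ((1/2)*QF) * ((1/2)*WF) := mul_le_mul hcs1 hcs2 hs2 (by linarith)
    have hWFhalf : (1/2)*WF = 2*D - (1/2)*QF := by linarith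
    rw [hWFhalf] at hbound
    calc T = Real.sqrt (T^2) := (Real.sqrt_sq hT0).symm
      _ ≤ Real.sqrt (((1/2)*QF) * (2*D - (1/2)*QF)) := Real.sqrt_le_sqrt hbound
  have hcoarea2 : D + p0 ≤ k * n0
      + (1+a) * (Real.sqrt (((1/2)*QF) * (2*D - (1/2)*QF)) + p0) := by
    have hmul := mul_le_mul_of_nonneg_left (add_le_add_left hTsqrt p0) h1a.le
    have : (1+a) * (T + p0) ≤ (1+a) * (Real.sqrt (((1/2)*QF) * (2*D - (1/2)*QF)) + p0) := hmul
    linarith [hcoarea]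
  have halg := algebraC a k ta c D ((1/2)*QF) p0 n0 ha hk hD0 (by linarith) hp00 hn00 hQ2D
    hta_pos hta_lt1 hta_a hta_sq2 hc hcoarea2
  -- assemble
  have hKg := hC g hgfin
  rw [hpotg (fun x => max (-q x) 0), hpotg (fun x => max (q x) 0), hnormg, hnormf] at hKg
  set X := (1/2)*QF + p0 with hX
  have hmagX : qMag G θ g + qPot (fun x => max (q x) 0) f ≤ 2*(D + p0) - X := by
    rw [hpotplus]
    have h5 : (1/2)*WF = 2*D - (1/2)*QF := by linarith
    have := hmagg
    rw [h5] at this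
    rw [hX]; linarith
  have hDpX : D + p0 ≤ (X + kt * n0)/(1-ta) := by
    rw [le_div_iff₀ h1t]
    have h6 : (1+c)*(k*n0) = kt * n0 := by rw [hktdef]; ring
    have h6 : (1+c)*(k*n0) = kt * n0 := by rw [hktdef]; ring
    calc (D + p0) * (1-ta) = (1-ta) * (D + p0) := by ring
      _ ≤ X + (1+c)*(k*n0) := halg
      _ = X + kt * n0 := by rw [h6]
  have hfinal1 : qMag G θ g + qPot (fun x => max (q x) 0) f
      ≤ ((1+ta)/(1-ta)) * X + (2*kt/(1-ta)) * n0 := by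
    have h6 : 2*((X + kt*n0)/(1-ta)) - X = ((1+ta)/(1-ta)) * X + (2*kt/(1-ta)) * n0 := by
      field_simp
      ring
    linarith [hmagX, hDpX]
  have hr0 : (0:ℝ) ≤ (1+ta)/(1-ta) := div_nonneg (by linarith) h1t.le
  have hXle : X ≤ qLap G f + qPot (fun x => max (q x) 0) f := by
    rw [hpotplus, hlapf, hX]
    have := mul_le_mul_of_nonneg_left hQF_le (show (0:ℝ) ≤ 1/2 by norm_num)
    linarith
  have hstep2 : α * (qMag G θ g + qPot (fun x => max (q x) 0) f)
      ≤ α * (((1+ta)/(1-ta)) * X + (2*kt/(1-ta)) * n0) :=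
    mul_le_mul_of_nonneg_left hfinal1 hα.le
  have hstep3 : ((1+ta)/(1-ta)) * X ≤ ((1+ta)/(1-ta)) * (qLap G f + qPot (fun x => max (q x) 0) f) :=
    mul_le_mul_of_nonneg_left hXle hr0
  have hstep4 : α * (((1+ta)/(1-ta)) * X + (2*kt/(1-ta)) * n0)
      ≤ α * (((1+ta)/(1-ta)) * (qLap G f + qPot (fun x => max (q x) 0) f) + (2*kt/(1-ta)) * n0) :=
    mul_le_mul_of_nonneg_left (by linarith) hα.le
  have heq : α * (((1+ta)/(1-ta)) * (qLap G f + qPot (fun x => max (q x) 0) f) + (2*kt/(1-ta)) * n0)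
      = α * (1+ta)/(1-ta) * (qLap G f + qPot (fun x => max (q x) 0) f)
        + (α * (2*kt/(1-ta))) * n0 := by ring
  rw [hnormf]
  calc qPot (fun x => max (-q x) 0) f
      ≤ α * (qMag G θ g + qPot (fun x => max (q x) 0) f) + C * n0 := hKg
    _ ≤ α * (((1+ta)/(1-ta)) * X + (2*kt/(1-ta)) * n0) + C * n0 :=
        add_le_add_left hstep2 _
    _ ≤ α * (((1+ta)/(1-ta)) * (qLap G f + qPot (fun x => max (q x) 0) f)
          + (2*kt/(1-ta)) * n0) + C * n0 := add_le_add_left hstep4 _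
    _ = α * (1+ta)/(1-ta) * (qLap G f + qPot (fun x => max (q x) 0) f)
          + (C + α * (2*kt/(1-ta))) * n0 := by ring

private lemma lapToMag (q : V → ℝ) (θ : V → V → ℝ) (β : ℝ) (hβ : 0 ≤ β) :
    KClass G q β → KClassTheta G θ q β := by
  rintro ⟨C, hC0, hC⟩
  refine ⟨C, hC0, ?_⟩
  intro f hf
  obtain ⟨S, hs, hnb⟩ := reduceS G f hf
  set g : V → ℂ := fun x => (‖f x‖ : ℂ) with hgdef
  have hgnorm : ∀ x, ‖g x‖ = ‖f x‖ := by
    intro x; rw [hgdef]; simp only []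
    rw [Complex.norm_real, Real.norm_eq_abs, abs_norm]
  have hg0 : ∀ x, g x = 0 ↔ f x = 0 := by
    intro x; rw [hgdef]; simp only []
    rw [Complex.ofReal_eq_zero, norm_eq_zero]
  have hgfin : (Function.support g).Finite := by
    refine hf.subset ?_
    intro x hx
    rw [Function.mem_support] at hx ⊢
    exact fun h => hx ((hg0 x).2 h)
  have hgs : ∀ x, g x ≠ 0 → x ∈ S := fun x hx => hs x (fun h => hx ((hg0 x).2 h))
  have hgnb : ∀ x y, g x ≠ 0 → G.Adj x y → y ∈ S :=
    fun x y hx hadj => hnb x y (fun h => hx ((hg0 x).2 h)) hadj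
  have hpotg : ∀ h : V → ℝ, qPot h g = qPot h f := by
    intro h; unfold qPot; exact tsum_congr fun x => by rw [hgnorm]
  have hnormg : qNormSq g = qNormSq f := tsum_congr fun x => by rw [hgnorm]
  have hexp : ∀ x y : V, ‖Complex.exp (Complex.I * (θ x y))‖ = 1 := by
    intro x y
    rw [Complex.norm_exp]
    simp
  have hlap_le : qLap G g ≤ qMag G θ f := by
    rw [qLap_pair G g S hgs hgnb, qMag_pair G θ f S hs hnb]
    refine mul_le_mul_of_nonneg_left ?_ (by norm_num)
    refine Finset.sum_le_sum fun p _ => ?_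
    have he : ‖Complex.exp (Complex.I * (θ p.1 p.2)) * f p.2‖ = ‖f p.2‖ := by
      rw [norm_mul, hexp, one_mul]
    have h1 := abs_norm_sub_norm_le (f p.1) (Complex.exp (Complex.I * (θ p.1 p.2)) * f p.2)
    rw [he] at h1
    have h2 : ‖g p.1 - g p.2‖^2 = (‖f p.1‖ - ‖f p.2‖)^2 := by
      rw [hgdef]
      simp only []
      rw [← Complex.ofReal_sub, Complex.norm_real, Real.norm_eq_abs, sq_abs]
    rw [h2]
    calc (‖f p.1‖ - ‖f p.2‖)^2 = |‖f p.1‖ - ‖f p.2‖|^2 := (sq_abs _).symm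
      _ ≤ ‖f p.1 - Complex.exp (Complex.I * (θ p.1 p.2)) * f p.2‖^2 :=
        pow_le_pow_left₀ (abs_nonneg _) h1 2
  have hKg := hC g hgfin
  rw [hpotg (fun x => max (-q x) 0), hpotg (fun x => max (q x) 0), hnormg] at hKg
  have := mul_le_mul_of_nonneg_left
    (add_le_add_right hlap_le (qPot (fun x => max (q x) 0) f)) hβ
  linarith [hKg]

end Aux

/-- for an `(a,k)`-sparse pair with `a > 0`, a phase `θ` and `α > 0`, with
`ã := √(min(1/4,a²)+2a+a²)/(1+a)`: if `q ∈ K_α^θ` then `q ∈ K_{α'}` for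
`α' = α(1+ã)/(1-ã)`; in particular `K_{0⁺}^θ = K_{0⁺}`. -/
theorem stmt11 [Countable V] (q : V → ℝ) (a k : ℝ) (ha : 0 < a) (hk : 0 ≤ k)
    (hsparse : IsSparse G q a k)
    (θ : V → V → ℝ) (hθ : ∀ x y, θ x y = -θ y x) (α : ℝ) (hα : 0 < α) :
    ∀ ta : ℝ, ta = Real.sqrt (min (1 / 4) (a ^ 2) + 2 * a + a ^ 2) / (1 + a) →
      (KClassTheta G θ q α → KClass G q (α * (1 + ta) / (1 - ta))) ∧
      ((∀ β : ℝ, 0 < β → β < 1 → KClassTheta G θ q β) ↔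
        (∀ β : ℝ, 0 < β → β < 1 → KClass G q β)) := by
  intro ta hta
  have h1a : (0:ℝ) < 1 + a := by linarith
  have hm0 : (0:ℝ) ≤ min (1/4) (a^2) := le_min (by norm_num) (sq_nonneg a)
  have hm14 : min (1/4) (a^2) ≤ (1/4:ℝ) := min_le_left _ _
  have hta_pos : 0 < ta := by
    rw [hta]
    apply div_pos _ h1a
    apply Real.sqrt_pos.2
    nlinarith
  have hta_lt1 : ta < 1 := by
    rw [hta, div_lt_one h1a]
    exact (Real.sqrt_lt' h1a).2 (by nlinarith)
  refine ⟨magToLap G q a k ha hk hsparse θ α hα ta hta, ?_, ?_⟩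
  · intro hall β hβ0 hβ1
    have hβ'0 : 0 < β * (1-ta)/(1+ta) := by
      apply div_pos _ (by linarith)
      apply mul_pos hβ0 (by linarith)
    have hβ'1 : β * (1-ta)/(1+ta) < 1 := by
      rw [div_lt_one (by linarith)]
      nlinarith
    have hk2 := magToLap G q a k ha hk hsparse θ _ hβ'0 ta hta (hall _ hβ'0 hβ'1)
    have heq : β * (1-ta)/(1+ta) * (1+ta)/(1-ta) = β := by
      have hne1 : (1-ta) ≠ 0 := by linarith
      have hne2 : (1+ta) ≠ 0 := by linarith
      field_simp
    rwa [heq] at hk2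
  · intro hall β hβ0 hβ1
    exact lapToMag G q θ β hβ0.le (hall β hβ0 hβ1)

end
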